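/- Under the hypotheses of the preceding theorem — namely, with (A + σI) V̂ = Ŵ G̃ + σ[EF 0], r₀ = ‖r₀‖ Ŵ e_{k+1}, r₀^{(σ)} = β̃₀ r₀ + w, the approximate collinearity system G̃ ỹ + β̃ₘ z = β̃₀ ‖r₀‖ e_{k+1}, rₘ = Ŵ z, and xₘ^{(σ)} = x₀^{(σ)} + V̂ ỹ — the shifted residual r̃ₘ^{(σ)} = b − (A + σI) xₘ^{(σ)} satisfies the norm inequality ‖r̃ₘ^{(σ)}‖ ≤ |β̃ₘ| · ‖rₘ‖ + |σ| · ‖EF‖ · ‖(ỹ)_{1:k}‖ + ‖w‖, where ‖EF‖ denotes the operator norm of EF induced by the Euclidean norms on ℂᵏ and ℂⁿ. -/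

import Mathlib

open Matrix

/-- The Euclidean (ℓ²) norm of a complex vector. -/
noncomputable def euclNorm {n : ℕ} (v : Fin n → ℂ) : ℝ :=
  ‖(WithLp.equiv 2 (Fin n → ℂ)).symm v‖

/-- The operator norm of a matrix, induced by the Euclidean norms. -/
noncomputable def euclOpNorm {n k : ℕ} (M : Matrix (Fin n) (Fin k) ℂ) : ℝ :=
  ‖(Matrix.toEuclideanLin M).toContinuousLinearMap‖

lemma euclNorm_add_le {n : ℕ} (u v : Fin n → ℂ) :
    euclNorm (u + v) ≤ euclNorm u + euclNorm v := by
  simpa [euclNorm] using norm_add_le ((WithLp.equiv 2 (Fin n → ℂ)).symm u)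
    ((WithLp.equiv 2 (Fin n → ℂ)).symm v)

lemma euclNorm_smul {n : ℕ} (c : ℂ) (v : Fin n → ℂ) :
    euclNorm (c • v) = ‖c‖ * euclNorm v := by
  simp [euclNorm, norm_smul]

lemma euclNorm_mulVec_le {n k : ℕ} (M : Matrix (Fin n) (Fin k) ℂ) (v : Fin k → ℂ) :
    euclNorm (M.mulVec v) ≤ euclOpNorm M * euclNorm v := by
  have h := (Matrix.toEuclideanLin M).toContinuousLinearMap.le_opNorm
    ((WithLp.equiv 2 (Fin k → ℂ)).symm v)
  simpa [euclNorm, euclOpNorm, Matrix.toEuclideanLin_apply_piLp_toLp] using h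

/-- Theorem (shifted residual relation for the approximate collinearity condition).
Given the perturbed Arnoldi-like relation `(A + σI) V̂ = Ŵ G̃ + σ [EF 0]`, the
initial relations `r₀ = ‖r₀‖ Ŵ e_{k+1}` and `r₀^{(σ)} = β̃₀ r₀ + w`, a solution
`(ỹ, β̃ₘ)` of the approximate collinearity system `G̃ ỹ + β̃ₘ z = β̃₀ ‖r₀‖ e_{k+1}`,
and `rₘ = Ŵ z`, the shifted approximation `xₘ^{(σ)} = x₀^{(σ)} + V̂ ỹ` has residual
norm bounded by `|β̃ₘ| ‖rₘ‖ + |σ| ‖EF‖ ‖(ỹ)_{1:k}‖ + ‖w‖`. -/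
theorem shifted_residual_norm_bound
    {n m k : ℕ} (hk : k ≤ m)
    (A : Matrix (Fin n) (Fin n) ℂ) (σ : ℂ)
    (W : Matrix (Fin n) (Fin (m + 1)) ℂ)      -- Ŵ
    (V : Matrix (Fin n) (Fin m) ℂ)            -- V̂
    (G : Matrix (Fin (m + 1)) (Fin m) ℂ)      -- G̃^{(σ)}
    (EF : Matrix (Fin n) (Fin k) ℂ)
    (P : Matrix (Fin n) (Fin m) ℂ)            -- [EF 0]
    (hP : P = Matrix.of fun i (j : Fin m) =>
      if h : (j : ℕ) < k then EF i ⟨j, h⟩ else 0)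
    (b x0σ r0 r0σ rm w : Fin n → ℂ)
    (β0 βm : ℂ) (y : Fin m → ℂ) (z : Fin (m + 1) → ℂ)
    -- (i) perturbed Arnoldi-like relation
    (hArnoldi : (A + σ • (1 : Matrix (Fin n) (Fin n) ℂ)) * V = W * G + σ • P)
    -- (ii) r₀ = ‖r₀‖ Ŵ e_{k+1}
    (hr0 : r0 = (euclNorm r0 : ℂ) •
      W.mulVec (Pi.single (⟨k, Nat.lt_succ_of_le hk⟩ : Fin (m + 1)) (1 : ℂ)))
    -- (iii) shifted initial residual: approximate collinearity
    (hr0σ : r0σ = b - (A + σ • (1 : Matrix (Fin n) (Fin n) ℂ)).mulVec x0σ)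
    (hcollin : r0σ = β0 • r0 + w)
    -- (iv) approximate collinearity system
    (hsys : G.mulVec y + βm • z
      = (β0 * (euclNorm r0 : ℂ)) •
        ((Pi.single (⟨k, Nat.lt_succ_of_le hk⟩ : Fin (m + 1)) (1 : ℂ)) :
          Fin (m + 1) → ℂ))
    -- (v) final base residual
    (hrm : rm = W.mulVec z) :
    euclNorm (b - (A + σ • (1 : Matrix (Fin n) (Fin n) ℂ)).mulVec (x0σ + V.mulVec y))
      ≤ ‖βm‖ * euclNorm rm
        + ‖σ‖ * euclOpNorm EF
            * euclNorm (fun i : Fin k => y ⟨i, lt_of_lt_of_le i.2 hk⟩)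
        + euclNorm w := by
  obtain ⟨d, rfl⟩ := Nat.exists_eq_add_of_le hk
  set M := A + σ • (1 : Matrix (Fin n) (Fin n) ℂ) with hM
  set yk : Fin k → ℂ := fun i : Fin k => y ⟨i, lt_of_lt_of_le i.2 hk⟩ with hyk
  set e : Fin (k + d + 1) → ℂ :=
    (Pi.single (⟨k, Nat.lt_succ_of_le hk⟩ : Fin (k + d + 1)) (1 : ℂ)) with he
  -- P y = EF y_{1:k}
  have hPy : P.mulVec y = EF.mulVec yk := by
    funext i
    simp only [hP, Matrix.mulVec, dotProduct, Matrix.of_apply, hyk]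
    rw [Fin.sum_univ_add]
    have hz : ∀ j : Fin d,
        (if h : ((Fin.natAdd k j : Fin (k + d)) : ℕ) < k then
          EF i ⟨(Fin.natAdd k j : Fin (k + d)), h⟩ else 0) * y (Fin.natAdd k j) = 0 := by
      intro j
      rw [dif_neg (by simp [Fin.natAdd]), zero_mul]
    rw [Finset.sum_congr rfl (fun j _ => hz j), Finset.sum_const_zero, add_zero]
    refine Finset.sum_congr rfl fun j _ => ?_
    have hc : ((Fin.castAdd d j : Fin (k + d)) : ℕ) < k := by simp
    rw [dif_pos hc]
    congr 1
  -- the residual identity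
  have h2 : G.mulVec y = (β0 * (euclNorm r0 : ℂ)) • e - βm • z := eq_sub_of_add_eq hsys
  have h1 : M.mulVec (V.mulVec y) = W.mulVec (G.mulVec y) + σ • P.mulVec y := by
    rw [Matrix.mulVec_mulVec, hArnoldi, Matrix.add_mulVec, ← Matrix.mulVec_mulVec,
      Matrix.smul_mulVec]
  have hWG : W.mulVec (G.mulVec y) = β0 • r0 - βm • rm := by
    rw [h2, Matrix.mulVec_sub, Matrix.mulVec_smul, Matrix.mulVec_smul, hrm, mul_smul,
      ← hr0]
  have key : b - M.mulVec (x0σ + V.mulVec y)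
      = βm • rm + ((-σ) • (EF.mulVec yk) + w) := by
    have hb : b - M.mulVec x0σ = β0 • r0 + w := by rw [← hr0σ, hcollin]
    rw [Matrix.mulVec_add, h1, hWG, hPy]
    have : b - M.mulVec x0σ - ((β0 • r0 - βm • rm) + σ • EF.mulVec yk)
        = βm • rm + ((-σ) • (EF.mulVec yk) + w) := by
      rw [hb]; module
    rw [← this]; abel
  rw [key]
  have hb1 := euclNorm_add_le (βm • rm) ((-σ) • (EF.mulVec yk) + w)
  have hb2 := euclNorm_add_le ((-σ) • (EF.mulVec yk)) w
  have hb3 : euclNorm ((-σ) • (EF.mulVec yk)) ≤ ‖σ‖ * (euclOpNorm EF * euclNorm yk) := by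
    rw [euclNorm_smul, norm_neg]
    exact mul_le_mul_of_nonneg_left (euclNorm_mulVec_le EF yk) (norm_nonneg σ)
  have hb4 : euclNorm (βm • rm) = ‖βm‖ * euclNorm rm := euclNorm_smul _ _
  calc euclNorm (βm • rm + ((-σ) • (EF.mulVec yk) + w))
      ≤ euclNorm (βm • rm) + (euclNorm ((-σ) • (EF.mulVec yk)) + euclNorm w) :=
        le_trans hb1 (by linarith)
    _ ≤ ‖βm‖ * euclNorm rm + (‖σ‖ * (euclOpNorm EF * euclNorm yk) + euclNorm w) := by
        rw [hb4]; gcongr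
    _ = ‖βm‖ * euclNorm rm + ‖σ‖ * euclOpNorm EF * euclNorm yk + euclNorm w := by ring
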